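/- Let G = (V,E) be a cactus and consider a metric weighted link instance on it with parameter p. If there exists at least one feasible link set, then there exists an optimal (minimum-cost feasible) link set F such that every node incident to a link of F is a corner node, i.e., belongs to R = R₁ ∪ R₂, where R₁ is the set of nodes of degree 2 and R₂ is the set of nodes incident to at least 3 circuits or to at least two circuits not both 2-circuits. -/

import Mathlib

open scoped Classical ENNReal

/-- The edge `e` has exactly one endpoint in `X`. -/
def CrossesEdge {V E : Type*} (ends : E → Sym2 V) (X : Finset V) (e : E) : Prop :=
  ∃ u v, ends e = s(u, v) ∧ u ∈ X ∧ v ∉ X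

/-- The number of edges with exactly one endpoint in `X`. -/
noncomputable def cutDeg {V E : Type*} [Fintype E] (ends : E → Sym2 V)
    (X : Finset V) : ℕ :=
  (Finset.univ.filter (CrossesEdge ends X)).card

/-- `C` is a circuit of the multigraph: the edge set of a simple cycle. -/
noncomputable def IsCircuit {V E : Type*} (ends : E → Sym2 V) (C : Finset E) : Prop :=
  ∃ (m : ℕ) (hm : 2 ≤ m) (e : Fin m → E) (v : Fin m → V),
    Function.Injective e ∧ Function.Injective v ∧
    (∀ i : Fin m, ends (e i) = s(v i, v ⟨(i.val + 1) % m, Nat.mod_lt _ (by omega)⟩)) ∧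
    C = Finset.image e Finset.univ

/-- The degree of a node: the number of incident edges. -/
noncomputable def mDegree {V E : Type*} [Fintype E] (ends : E → Sym2 V) (v : V) : ℕ :=
  (Finset.univ.filter (fun e : E => v ∈ ends e)).card

/-- The node `v` is incident to (lies on) the circuit `C`. -/
def IncidentCircuit {V E : Type*} (ends : E → Sym2 V) (v : V) (C : Finset E) : Prop :=
  IsCircuit ends C ∧ ∃ e ∈ C, v ∈ ends e

/-- The node `v` is incident to at least 3 circuits, or to at least two circuits not
both of which are 2-circuits. -/
def IsBranchNode {V E : Type*} (ends : E → Sym2 V) (v : V) : Prop :=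
  (∃ C₁ C₂ C₃ : Finset E, C₁ ≠ C₂ ∧ C₁ ≠ C₃ ∧ C₂ ≠ C₃ ∧
      IncidentCircuit ends v C₁ ∧ IncidentCircuit ends v C₂ ∧
      IncidentCircuit ends v C₃) ∨
  (∃ C₁ C₂ : Finset E, C₁ ≠ C₂ ∧ IncidentCircuit ends v C₁ ∧
      IncidentCircuit ends v C₂ ∧ ¬ (C₁.card = 2 ∧ C₂.card = 2))

/-- A corner node of the cactus: a node of degree 2, or a node incident to at least
3 circuits or to at least two circuits not both 2-circuits. -/
def IsCornerNode {V E : Type*} [Fintype E] (ends : E → Sym2 V) (v : V) : Prop :=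
  mDegree ends v = 2 ∨ IsBranchNode ends v

/-- `X` is a minimum cut of the cactus (a cut of value 2). -/
def IsMinCut {V E : Type*} [Fintype V] [Fintype E] (ends : E → Sym2 V)
    (X : Finset V) : Prop :=
  X ≠ ∅ ∧ X ≠ Finset.univ ∧ cutDeg ends X = 2

/-- The link `l = (u, v, t)` covers the cut `X`: exactly one of `u, v` lies in `X`. -/
def Covers {V : Type*} (l : V × V × ℕ) (X : Finset V) : Prop :=
  Xor' (l.1 ∈ X) (l.2.1 ∈ X)

/-- A link `(u, v, t)` is valid for parameter `p`. -/
def ValidLink {V : Type*} (p : ℕ) (l : V × V × ℕ) : Prop :=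
  l.1 ≠ l.2.1 ∧ 1 ≤ l.2.2 ∧ l.2.2 ≤ p

/-- The link `f` is a shadow of the link `e`: `f` has weight at least that of `e` and
every minimum cut covered by `f` is covered by `e`. -/
def IsShadow {V E : Type*} [Fintype V] [Fintype E] (ends : E → Sym2 V)
    (f e : V × V × ℕ) : Prop :=
  e.2.2 ≤ f.2.2 ∧ ∀ X : Finset V, IsMinCut ends X → Covers f X → Covers e X

/-- The weighted link instance `c` on the cactus with parameter `p` is metric. -/
def IsMetricInstance {V E : Type*} [Fintype V] [Fintype E] (ends : E → Sym2 V)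
    (p : ℕ) (c : V → V → ℕ → ℝ≥0∞) : Prop :=
  (∀ e f : V × V × ℕ, ValidLink p e → ValidLink p f → IsShadow ends f e →
      c f.1 f.2.1 f.2.2 ≤ c e.1 e.2.1 e.2.2) ∧
  (∀ u v z : V, ∀ t₁ t₂ t₃ : ℕ, u ≠ v → v ≠ z → u ≠ z →
      1 ≤ t₁ → 1 ≤ t₂ → t₃ ≤ p → t₁ + t₂ ≤ t₃ →
      c u z t₃ ≤ c u v t₁ + c v z t₂)

/-- A link set `F` is feasible: all links are valid, the total weight is at most `p`,
and every minimum cut is covered by some link of `F`. -/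
def Feasible {V E : Type*} [Fintype V] [Fintype E] (ends : E → Sym2 V) (p : ℕ)
    (F : Finset (V × V × ℕ)) : Prop :=
  (∀ l ∈ F, ValidLink p l) ∧ (∑ l ∈ F, l.2.2) ≤ p ∧
    ∀ X : Finset V, IsMinCut ends X → ∃ l ∈ F, Covers l X

/-- The total cost of a link set. -/
noncomputable def linkCost {V : Type*} (c : V → V → ℕ → ℝ≥0∞)
    (F : Finset (V × V × ℕ)) : ℝ≥0∞ :=
  ∑ l ∈ F, c l.1 l.2.1 l.2.2


namespace CactusAux
set_option linter.unusedSectionVars false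

variable {V E : Type*} [Fintype V] [Fintype E]

lemma sym2_exists_mk (z : Sym2 V) : ∃ x y, z = s(x, y) :=
  Sym2.ind (fun x y => ⟨x, y, rfl⟩) z

lemma crossesEdge_iff (ends : E → Sym2 V) {X : Finset V} {e : E} {x y : V}
    (h : ends e = s(x, y)) : CrossesEdge ends X e ↔ Xor' (x ∈ X) (y ∈ X) := by
  constructor
  · rintro ⟨u, v, huv, hu, hv⟩
    rw [h] at huv
    rcases Sym2.eq_iff.1 huv with ⟨rfl, rfl⟩ | ⟨rfl, rfl⟩
    · exact Or.inl ⟨hu, hv⟩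
    · exact Or.inr ⟨hu, hv⟩
  · rintro (⟨hx, hy⟩ | ⟨hy, hx⟩)
    · exact ⟨x, y, h, hx, hy⟩
    · exact ⟨y, x, by rw [h, Sym2.eq_swap], hy, hx⟩

lemma not_crossesEdge_iff (ends : E → Sym2 V) {X : Finset V} {e : E} {x y : V}
    (h : ends e = s(x, y)) : ¬ CrossesEdge ends X e ↔ (x ∈ X ↔ y ∈ X) := by
  rw [crossesEdge_iff ends h, Xor', xor_iff_not_iff']
  tauto

lemma crossesEdge_compl (ends : E → Sym2 V) {X : Finset V} {e : E} :
    CrossesEdge ends Xᶜ e ↔ CrossesEdge ends X e := by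
  obtain ⟨x, y, h⟩ := sym2_exists_mk (ends e)
  rw [crossesEdge_iff ends h, crossesEdge_iff ends h]
  simp only [Finset.mem_compl]
  unfold Xor' Xor
  tauto

lemma cutDeg_compl (ends : E → Sym2 V) (X : Finset V) :
    cutDeg ends Xᶜ = cutDeg ends X := by
  unfold cutDeg
  congr 1
  apply Finset.filter_congr
  intro e _
  simp [crossesEdge_compl]

lemma isMinCut_compl (ends : E → Sym2 V) {X : Finset V} (h : IsMinCut ends X) :
    IsMinCut ends Xᶜ := by
  obtain ⟨h1, h2, h3⟩ := h
  refine ⟨?_, ?_, by rw [cutDeg_compl]; exact h3⟩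
  · intro hc
    apply h2
    rw [← compl_compl X, hc, Finset.compl_empty]
  · intro hc
    apply h1
    rw [← compl_compl X, hc, Finset.compl_univ]

lemma covers_compl {l : V × V × ℕ} {X : Finset V} :
    Covers l Xᶜ ↔ Covers l X := by
  unfold Covers Xor' Xor
  simp only [Finset.mem_compl]
  tauto

lemma mem_compl_iff (X : Finset V) (x : V) : x ∈ Xᶜ ↔ x ∉ X := Finset.mem_compl

/-- Reachability in the multigraph, using only edges satisfying `P`. -/
def Step (ends : E → Sym2 V) (P : E → Prop) (x y : V) : Prop :=
  ∃ e, P e ∧ ends e = s(x, y)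

def Reach (ends : E → Sym2 V) (P : E → Prop) : V → V → Prop :=
  Relation.ReflTransGen (Step ends P)

lemma step_symm {ends : E → Sym2 V} {P : E → Prop} : Symmetric (Step ends P) := by
  rintro x y ⟨e, hP, he⟩
  exact ⟨e, hP, by rw [he, Sym2.eq_swap]⟩

lemma reach_symm {ends : E → Sym2 V} {P : E → Prop} {x y : V}
    (h : Reach ends P x y) : Reach ends P y x :=
  @Std.Symm.symm _ _ (@Relation.ReflTransGen.symmetric _ _ ⟨fun _ _ h => step_symm h⟩) _ _ h

lemma reach_trans {ends : E → Sym2 V} {P : E → Prop} {x y z : V}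
    (h : Reach ends P x y) (h' : Reach ends P y z) : Reach ends P x z :=
  Relation.ReflTransGen.trans h h'

lemma reach_mem_iff {ends : E → Sym2 V} {P : E → Prop} {X : Finset V}
    (hX : ∀ e p q, P e → ends e = s(p, q) → (p ∈ X ↔ q ∈ X)) {w z : V}
    (h : Reach ends P w z) : w ∈ X ↔ z ∈ X := by
  induction h with
  | refl => rfl
  | tail _ hstep ih =>
      obtain ⟨e, hP, he⟩ := hstep
      exact ih.trans (hX e _ _ hP he)

lemma cross_of_reach {ends : E → Sym2 V} {P : E → Prop} {X : Finset V} {x y : V}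
    (h : Reach ends P x y) (hx : x ∈ X) (hy : y ∉ X) :
    ∃ e z z', P e ∧ ends e = s(z, z') ∧ z ∈ X ∧ z' ∉ X ∧
      Reach ends P x z ∧ Reach ends P x z' := by
  induction h with
  | refl => exact absurd hx hy
  | @tail b c hreach hstep ih =>
      by_cases hb : b ∈ X
      · obtain ⟨e, hP, he⟩ := hstep
        exact ⟨e, b, c, hP, he, hb, hy, hreach, hreach.tail ⟨e, hP, he⟩⟩
      · obtain ⟨e, z, z', h1, h2, h3, h4, h5, h6⟩ := ih hb
        exact ⟨e, z, z', h1, h2, h3, h4, h5, h6⟩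

lemma reach_global (ends : E → Sym2 V)
    (h2ec : ∀ X : Finset V, X ≠ ∅ → X ≠ Finset.univ → 2 ≤ cutDeg ends X)
    (x y : V) : Reach ends (fun _ => True) x y := by
  by_contra hxy
  set X : Finset V := Finset.univ.filter (fun w => Reach ends (fun _ => True) x w) with hXdef
  have hxX : x ∈ X := Finset.mem_filter.2 ⟨Finset.mem_univ _, Relation.ReflTransGen.refl⟩
  have hyX : y ∉ X := by simp [hXdef]; exact hxy
  have h1 : X ≠ ∅ := Finset.ne_empty_of_mem hxX
  have h2 : X ≠ Finset.univ := fun h => hyX (h ▸ Finset.mem_univ y)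
  have h3 := h2ec X h1 h2
  have h4 : 0 < cutDeg ends X := by omega
  have : (Finset.univ.filter (CrossesEdge ends X)).Nonempty := Finset.card_pos.mp h4
  obtain ⟨e, he⟩ := this
  have hce : CrossesEdge ends X e := (Finset.mem_filter.1 he).2
  obtain ⟨u, v, huv, hu, hv⟩ := hce
  apply hv
  have hru : Reach ends (fun _ => True) x u := by
    simpa [hXdef] using hu
  have : Reach ends (fun _ => True) x v := hru.tail ⟨e, trivial, huv⟩
  simp [hXdef, this]

end CactusAux

namespace CactusAux
set_option linter.unusedSectionVars false
set_option maxHeartbeats 1000000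

variable {V E : Type*} [Fintype V] [Fintype E]

/-- An injective path of length `n` from `x` to `y` using edges satisfying `P`. -/
def InjPath (ends : E → Sym2 V) (P : E → Prop) (x y : V) (n : ℕ) : Prop :=
  ∃ f : ℕ → V, (∀ i j, i ≤ n → j ≤ n → f i = f j → i = j) ∧ f 0 = x ∧ f n = y ∧
    ∀ i, i < n → ∃ e, P e ∧ ends e = s(f i, f (i + 1))

lemma injPath_of_reach {ends : E → Sym2 V} {P : E → Prop} {x y : V}
    (h : Reach ends P x y) : ∃ n, InjPath ends P x y n := by
  induction h with
  | refl =>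
      exact ⟨0, fun _ => x, fun i j hi hj _ => by omega, rfl, rfl, fun i hi => by omega⟩
  | @tail b z hreach hstep ih =>
      obtain ⟨n, f, hinj, h0, hn, hsteps⟩ := ih
      by_cases hz : ∃ k, k ≤ n ∧ f k = z
      · obtain ⟨k, hk, hfk⟩ := hz
        exact ⟨k, f, fun i j hi hj => hinj i j (by omega) (by omega), h0, hfk,
          fun i hi => hsteps i (by omega)⟩
      · push_neg at hz
        obtain ⟨e, hP, he⟩ := hstep
        refine ⟨n + 1, fun i => if i ≤ n then f i else z, ?_, ?_, ?_, ?_⟩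
        · intro i j hi hj hij
          by_cases h1 : i ≤ n <;> by_cases h2 : j ≤ n <;> simp [h1, h2] at hij
          · exact hinj i j h1 h2 hij
          · exact absurd hij (hz i h1)
          · exact absurd hij.symm (hz j h2)
          · omega
        · simpa using h0
        · simp
        · intro i hi
          rcases Nat.lt_or_ge i n with h1 | h1
          · obtain ⟨e', hP', he'⟩ := hsteps i h1
            exact ⟨e', hP', by simpa [Nat.le_of_lt h1, Nat.succ_le_of_lt h1] using he'⟩
          · have hin : i = n := by omega
            refine ⟨e, hP, ?_⟩
            have hv1 : (if i ≤ n then f i else z) = b := by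
              rw [if_pos (by omega), hin, hn]
            have hv2 : (if i + 1 ≤ n then f (i + 1) else z) = z := by
              rw [if_neg (by omega)]
            simpa only [hv1, hv2] using he

lemma reach_of_injPath_prefix {ends : E → Sym2 V} {P : E → Prop} {n : ℕ} {f : ℕ → V}
    (hsteps : ∀ i, i < n → ∃ e, P e ∧ ends e = s(f i, f (i + 1))) :
    ∀ k, k ≤ n → Reach ends P (f 0) (f k) := by
  intro k
  induction k with
  | zero => exact fun _ => Relation.ReflTransGen.refl
  | succ k ih =>
      intro hk
      obtain ⟨e, hP, he⟩ := hsteps k (by omega)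
      exact (ih (by omega)).tail ⟨e, hP, he⟩

/-- index successor in a cyclic structure -/
lemma circuit_mem_iff {ends : E → Sym2 V} {C : Finset E} {m : ℕ} {e : Fin m → E}
    (hC : C = Finset.image e Finset.univ) {g : E} : g ∈ C ↔ ∃ i, e i = g := by
  subst hC; simp

lemma status_all_eq {ends : E → Sym2 V} {m : ℕ} (hm : 2 ≤ m) (v : Fin m → V)
    (Y : Finset V)
    (hstep : ∀ i : Fin m, (v i ∈ Y ↔ v ⟨(i.val + 1) % m, Nat.mod_lt _ (by omega)⟩ ∈ Y)) :
    ∀ i j : Fin m, (v i ∈ Y ↔ v j ∈ Y) := by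
  have key : ∀ n : ℕ, (v ⟨n % m, Nat.mod_lt _ (by omega)⟩ ∈ Y ↔ v ⟨0 % m, Nat.mod_lt _ (by omega)⟩ ∈ Y) := by
    intro n
    induction n with
    | zero => rfl
    | succ n ih =>
        have h1 : ((n % m) + 1) % m = (n + 1) % m := by
          calc (n % m + 1) % m = (n % m + 1 % m) % m := by
                rw [Nat.mod_eq_of_lt (show 1 < m by omega)]
            _ = (n + 1) % m := (Nat.add_mod n 1 m).symm
        have hs := hstep ⟨n % m, Nat.mod_lt _ (by omega)⟩
        simp only at hs
        have e1 : (⟨(n + 1) % m, Nat.mod_lt _ (by omega)⟩ : Fin m)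
            = ⟨(n % m + 1) % m, Nat.mod_lt _ (by omega)⟩ := Fin.ext h1.symm
        rw [e1]
        exact (hs.symm.trans ih)
  intro i j
  have hi : i = ⟨i.val % m, Nat.mod_lt _ (by omega)⟩ := by
    ext; simp [Nat.mod_eq_of_lt i.isLt]
  have hj : j = ⟨j.val % m, Nat.mod_lt _ (by omega)⟩ := by
    ext; simp [Nat.mod_eq_of_lt j.isLt]
  rw [hi, hj, key i.val, key j.val]

end CactusAux

namespace CactusAux
set_option linter.unusedSectionVars false
set_option maxHeartbeats 1000000

variable {V E : Type*} [Fintype V] [Fintype E]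

section CircuitPres

variable {ends : E → Sym2 V} {m : ℕ} {e : Fin m → E} {v : Fin m → V}

lemma hsucc_eq (hm : 2 ≤ m) (i : Fin m) :
    haveI : NeZero m := ⟨by omega⟩
    (⟨(i.val + 1) % m, Nat.mod_lt _ (by omega)⟩ : Fin m) = i + 1 := by
  haveI : NeZero m := ⟨by omega⟩
  apply Fin.ext
  rw [Fin.add_def]
  have h1 : (1 : Fin m).val = 1 := by
    rw [Fin.val_one']
    exact Nat.mod_eq_of_lt (by omega)
  rw [h1]

lemma exists_switch (hm : 2 ≤ m)
    (hends : ∀ i : Fin m, ends (e i) = s(v i, v ⟨(i.val + 1) % m, Nat.mod_lt _ (by omega)⟩))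
    (Y : Finset V) (i j : Fin m) (hi : v i ∈ Y) (hj : v j ∉ Y) :
    ∃ k, CrossesEdge ends Y (e k) := by
  by_contra hno
  push_neg at hno
  have hstep : ∀ i : Fin m,
      (v i ∈ Y ↔ v ⟨(i.val + 1) % m, Nat.mod_lt _ (by omega)⟩ ∈ Y) := by
    intro i
    exact (not_crossesEdge_iff ends (hends i)).1 (hno i)
  have := status_all_eq (ends := ends) hm v Y hstep i j
  exact hj (this.1 hi)

lemma exists_second_cross (hm : 2 ≤ m) (einj : Function.Injective e) (vinj : Function.Injective v)
    (hends : ∀ i : Fin m, ends (e i) = s(v i, v ⟨(i.val + 1) % m, Nat.mod_lt _ (by omega)⟩))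
    (X : Finset V) (i1 : Fin m) (hc : CrossesEdge ends X (e i1)) :
    ∃ j, j ≠ i1 ∧ CrossesEdge ends X (e j) := by
  haveI : NeZero m := ⟨by omega⟩
  have hends' : ∀ i : Fin m, ends (e i) = s(v i, v (i + 1)) := by
    intro i
    rw [hends i, hsucc_eq hm i]
  set χ : Fin m → ZMod 2 := fun i => if v i ∈ X then 1 else 0 with hχ
  have hsum : ∑ i : Fin m, (χ (i + 1) - χ i) = 0 := by
    rw [Finset.sum_sub_distrib]
    rw [show ∑ i : Fin m, χ (i + 1) = ∑ i : Fin m, χ i from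
      Equiv.sum_comp (Equiv.addRight (1 : Fin m)) χ]
    exact sub_self _
  have hterm : ∀ i : Fin m,
      χ (i + 1) - χ i = if ¬ (v i ∈ X ↔ v (i + 1) ∈ X) then 1 else 0 := by
    intro i
    by_cases h1 : v i ∈ X <;> by_cases h2 : v (i + 1) ∈ X <;>
      simp [hχ, h1, h2] <;> decide
  have hcard : (((Finset.univ.filter
      (fun i : Fin m => ¬ (v i ∈ X ↔ v (i + 1) ∈ X)))).card : ZMod 2) = 0 := by
    rw [← Finset.sum_boole]
    conv_rhs => rw [← hsum]
    exact Finset.sum_congr rfl fun i _ => (hterm i).symm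
  have hdvd : 2 ∣ (Finset.univ.filter
      (fun i : Fin m => ¬ (v i ∈ X ↔ v (i + 1) ∈ X))).card :=
    (ZMod.natCast_eq_zero_iff _ 2).1 hcard
  have hmem : i1 ∈ Finset.univ.filter
      (fun i : Fin m => ¬ (v i ∈ X ↔ v (i + 1) ∈ X)) := by
    rw [Finset.mem_filter]
    refine ⟨Finset.mem_univ _, ?_⟩
    have := (crossesEdge_iff ends (hends' i1)).1 hc
    rw [Xor', xor_iff_not_iff] at this
    exact this
  have h2 : 1 < (Finset.univ.filter
      (fun i : Fin m => ¬ (v i ∈ X ↔ v (i + 1) ∈ X))).card := by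
    have h1 : 0 < (Finset.univ.filter
      (fun i : Fin m => ¬ (v i ∈ X ↔ v (i + 1) ∈ X))).card := Finset.card_pos.2 ⟨i1, hmem⟩
    omega
  obtain ⟨j, hjT, hji⟩ := Finset.exists_mem_ne h2 i1
  refine ⟨j, hji, ?_⟩
  rw [Finset.mem_filter] at hjT
  rw [crossesEdge_iff ends (hends' j), Xor', xor_iff_not_iff]
  exact hjT.2

end CircuitPres

lemma circuit_card_two {ends : E → Sym2 V} {C : Finset E}
    (hC : IsCircuit ends C) (hcard : C.card = 2) {g : E} (hg : g ∈ C) {u : V}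
    (hu : u ∈ ends g) :
    ∃ p1 p2 a, C = {p1, p2} ∧ p1 ≠ p2 ∧ a ≠ u ∧ ends p1 = s(u, a) ∧ ends p2 = s(u, a) := by
  obtain ⟨m, hm, e, v, einj, vinj, hends, hCim⟩ := hC
  have hmm : m = 2 := by
    have : C.card = m := by
      rw [hCim, Finset.card_image_of_injective _ einj, Finset.card_univ, Fintype.card_fin]
    omega
  subst hmm
  have huniv : (Finset.univ : Finset (Fin 2)) = {0, 1} := by decide
  have hC01 : C = {e 0, e 1} := by
    rw [hCim, huniv]
    simp
  have hends0 : ends (e 0) = s(v 0, v 1) := by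
    have := hends 0
    convert this using 3
    rfl
  have hends1 : ends (e 1) = s(v 1, v 0) := by
    have := hends 1
    convert this using 3
    rfl
  have hne : e 0 ≠ e 1 := fun h => absurd (einj h) (by decide)
  have hvne : v 0 ≠ v 1 := fun h => absurd (vinj h) (by decide)
  have hg01 : g = e 0 ∨ g = e 1 := by
    rw [hC01] at hg
    simpa using hg
  have huv : u = v 0 ∨ u = v 1 := by
    rcases hg01 with rfl | rfl
    · rw [hends0] at hu
      simpa using hu
    · rw [hends1] at hu
      rcases Sym2.mem_iff.1 hu with h | h
      · exact Or.inr h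
      · exact Or.inl h
  rcases huv with rfl | rfl
  · exact ⟨e 0, e 1, v 1, hC01, hne, fun h => hvne h.symm, hends0,
      by rw [hends1, Sym2.eq_swap]⟩
  · exact ⟨e 1, e 0, v 0, by rw [hC01]; exact Finset.pair_comm _ _, hne.symm,
      fun h => hvne h, hends1, by rw [hends0, Sym2.eq_swap]⟩

lemma circuit_incident_le_two {ends : E → Sym2 V} {C : Finset E}
    (hC : IsCircuit ends C) (u : V)
    (hall : ∀ e', u ∈ ends e' → e' ∈ C) : mDegree ends u ≤ 2 := by
  obtain ⟨m, hm, e, v, einj, vinj, hends, hCim⟩ := hC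
  haveI : NeZero m := ⟨by omega⟩
  have hends' : ∀ i : Fin m, ends (e i) = s(v i, v (i + 1)) := by
    intro i
    rw [hends i, hsucc_eq hm i]
  by_cases hex : ∃ i0 : Fin m, v i0 = u
  · obtain ⟨i0, hi0⟩ := hex
    have hsub : Finset.univ.filter (fun e' : E => u ∈ ends e') ⊆ {e i0, e (i0 - 1)} := by
      intro g hgmem
      have hu : u ∈ ends g := (Finset.mem_filter.1 hgmem).2
      have hgC : g ∈ C := hall g hu
      rw [hCim] at hgC
      obtain ⟨j, _, rfl⟩ := Finset.mem_image.1 hgC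
      rw [hends' j, Sym2.mem_iff] at hu
      rcases hu with h | h
      · have : j = i0 := vinj (by rw [← h, ← hi0])
        subst this
        simp
      · have hji : j + 1 = i0 := vinj (by rw [← h, ← hi0])
        have : j = i0 - 1 := eq_sub_of_add_eq hji
        subst this
        simp
    calc mDegree ends u ≤ ({e i0, e (i0 - 1)} : Finset E).card := Finset.card_le_card hsub
      _ ≤ 2 := Finset.card_insert_le _ _ |>.trans (by simp)
  · push_neg at hex
    have : Finset.univ.filter (fun e' : E => u ∈ ends e') = ∅ := by
      apply Finset.filter_eq_empty_iff.2
      intro g _ hu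
      have hgC : g ∈ C := hall g hu
      rw [hCim] at hgC
      obtain ⟨j, _, rfl⟩ := Finset.mem_image.1 hgC
      rw [hends' j, Sym2.mem_iff] at hu
      rcases hu with h | h
      · exact hex j h.symm
      · exact hex (j + 1) h.symm
    unfold mDegree
    rw [this]
    simp

end CactusAux

namespace CactusAux
set_option linter.unusedSectionVars false
set_option maxHeartbeats 1000000

variable {V E : Type*} [Fintype V] [Fintype E]

lemma circuit_of_path {ends : E → Sym2 V} {u a b : V} {p1 q1 : E} {n : ℕ}
    {f : ℕ → V}
    (hpq : p1 ≠ q1)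
    (hendsp1 : ends p1 = s(u, a)) (hendsq1 : ends q1 = s(u, b))
    (hinj : ∀ i j, i ≤ n → j ≤ n → f i = f j → i = j)
    (h0 : f 0 = a) (hn : f n = b)
    (hsteps : ∀ i, i < n → ∃ e, (e ≠ p1 ∧ e ≠ q1 ∧ (∀ w, w ∈ ends e → w ≠ u)) ∧
      ends e = s(f i, f (i + 1)))
    (hfu : ∀ k, k ≤ n → f k ≠ u) :
    ∃ C, IsCircuit ends C ∧ p1 ∈ C ∧ q1 ∈ C := by
  classical
  set g : ℕ → E := fun i => if h : i < n then (hsteps i h).choose else p1 with hg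
  have hgspec : ∀ i, (h : i < n) → ((g i ≠ p1 ∧ g i ≠ q1 ∧ (∀ w, w ∈ ends (g i) → w ≠ u)) ∧
      ends (g i) = s(f i, f (i + 1))) := by
    intro i h
    rw [hg]
    simp only [dif_pos h]
    exact (hsteps i h).choose_spec
  set m : ℕ := n + 2 with hmdef
  have hm : 2 ≤ m := by omega
  set v' : Fin m → V := fun i => if i.val = 0 then u else f (i.val - 1) with hv'
  set e' : Fin m → E := fun i =>
    if i.val = 0 then p1 else if i.val = n + 1 then q1 else g (i.val - 1) with he'
  have hv'0 : ∀ (i : Fin m), i.val = 0 → v' i = u := by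
    intro i h; simp only [hv']; exact if_pos h
  have hv'pos : ∀ (i : Fin m), i.val ≠ 0 → v' i = f (i.val - 1) := by
    intro i hi; simp only [hv']; exact if_neg hi
  have hE0 : ∀ i : Fin m, i.val = 0 → e' i = p1 := by
    intro i h; simp only [he']; exact if_pos h
  have hE1 : ∀ i : Fin m, i.val = n + 1 → e' i = q1 := by
    intro i h
    have : i.val ≠ 0 := by omega
    simp only [he']; rw [if_neg this, if_pos h]
  have hEm : ∀ i : Fin m, i.val ≠ 0 → i.val ≠ n + 1 → e' i = g (i.val - 1) := by
    intro i h h'; simp only [he']; rw [if_neg h, if_neg h']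
  have hmidlt : ∀ i : Fin m, i.val ≠ 0 → i.val ≠ n + 1 → i.val - 1 < n := by
    intro i h h'
    have := i.isLt
    omega
  -- injectivity of v'
  have vinj : Function.Injective v' := by
    intro i j hij
    by_cases h1 : i.val = 0 <;> by_cases h2 : j.val = 0
    · apply Fin.ext; omega
    · rw [hv'0 i h1, hv'pos j h2] at hij
      exact absurd hij.symm (hfu (j.val - 1) (by have := j.isLt; omega))
    · rw [hv'pos i h1, hv'0 j h2] at hij
      exact absurd hij (hfu (i.val - 1) (by have := i.isLt; omega))
    · rw [hv'pos i h1, hv'pos j h2] at hij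
      have := hinj _ _ (by have := i.isLt; omega : i.val - 1 ≤ n)
        (by have := j.isLt; omega : j.val - 1 ≤ n) hij
      apply Fin.ext; omega
  -- injectivity of g on < n
  have hginj : ∀ i j, i < n → j < n → g i = g j → i = j := by
    intro i j hi hj hij
    have h1 := (hgspec i hi).2
    have h2 := (hgspec j hj).2
    rw [hij, h2] at h1
    rcases Sym2.eq_iff.1 h1 with ⟨ha1, ha2⟩ | ⟨ha1, ha2⟩
    · exact (hinj j i (by omega) (by omega) ha1).symm
    · have e1 := hinj j (i + 1) (by omega) (by omega) ha1
      have e2 := hinj (j + 1) i (by omega) (by omega) ha2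
      omega
  have einj : Function.Injective e' := by
    intro i j hij
    by_cases h1 : i.val = 0 <;> by_cases h2 : j.val = 0
    · apply Fin.ext; omega
    · rw [hE0 i h1] at hij
      by_cases h4 : j.val = n + 1
      · rw [hE1 j h4] at hij; exact absurd hij hpq
      · rw [hEm j h2 h4] at hij
        exact absurd hij.symm (hgspec _ (hmidlt j h2 h4)).1.1
    · rw [hE0 j h2] at hij
      by_cases h3 : i.val = n + 1
      · rw [hE1 i h3] at hij; exact absurd hij.symm hpq
      · rw [hEm i h1 h3] at hij
        exact absurd hij (hgspec _ (hmidlt i h1 h3)).1.1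
    · by_cases h3 : i.val = n + 1 <;> by_cases h4 : j.val = n + 1
      · apply Fin.ext; omega
      · rw [hE1 i h3, hEm j h2 h4] at hij
        exact absurd hij.symm (hgspec _ (hmidlt j h2 h4)).1.2.1
      · rw [hEm i h1 h3, hE1 j h4] at hij
        exact absurd hij (hgspec _ (hmidlt i h1 h3)).1.2.1
      · rw [hEm i h1 h3, hEm j h2 h4] at hij
        have := hginj _ _ (hmidlt i h1 h3) (hmidlt j h2 h4) hij
        apply Fin.ext; omega
  -- the cyclic edge conditions
  have hends : ∀ i : Fin m,
      ends (e' i) = s(v' i, v' ⟨(i.val + 1) % m, Nat.mod_lt _ (by omega)⟩) := by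
    intro i
    by_cases h1 : i.val = 0
    · have hidx : (⟨(i.val + 1) % m, Nat.mod_lt _ (by omega)⟩ : Fin m) = ⟨1, by omega⟩ :=
        Fin.ext (by simp [h1, hmdef])
      rw [hE0 i h1, hv'0 i h1, hidx, hv'pos ⟨1, by omega⟩ (by norm_num)]
      simpa [h0] using hendsp1
    · by_cases h3 : i.val = n + 1
      · have hidx : (⟨(i.val + 1) % m, Nat.mod_lt _ (by omega)⟩ : Fin m) = ⟨0, by omega⟩ :=
          Fin.ext (by simp [h3, hmdef])
        rw [hE1 i h3, hv'pos i h1, hidx, hv'0 ⟨0, by omega⟩ rfl, h3]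
        simp only [Nat.add_sub_cancel]
        rw [hn, hendsq1, Sym2.eq_swap]
      · have hlt := hmidlt i h1 h3
        have hne0 : (i.val + 1) % m = i.val + 1 :=
          Nat.mod_eq_of_lt (by have := i.isLt; omega)
        have hidx : (⟨(i.val + 1) % m, Nat.mod_lt _ (by omega)⟩ : Fin m)
            = ⟨i.val + 1, by have := i.isLt; omega⟩ := Fin.ext (by simp [hne0])
        rw [hEm i h1 h3, hv'pos i h1, hidx, hv'pos ⟨i.val + 1, by have := i.isLt; omega⟩
          (Nat.succ_ne_zero _)]
        have hsp := (hgspec _ hlt).2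
        rw [show i.val - 1 + 1 = i.val + 1 - 1 from by omega] at hsp
        exact hsp
  refine ⟨Finset.image e' Finset.univ, ⟨m, hm, e', v', einj, vinj, hends, rfl⟩, ?_, ?_⟩
  · exact Finset.mem_image.2 ⟨⟨0, by omega⟩, Finset.mem_univ _, hE0 _ rfl⟩
  · exact Finset.mem_image.2 ⟨⟨n + 1, by omega⟩, Finset.mem_univ _, hE1 _ rfl⟩

end CactusAux

namespace CactusAux
set_option linter.unusedSectionVars false
set_option maxHeartbeats 2000000

variable {V E : Type*} [Fintype V] [Fintype E]

lemma noncorner_structure (ends : E → Sym2 V)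
    (hloopless : ∀ e : E, ¬ (ends e).IsDiag)
    (hV : 2 ≤ Fintype.card V)
    (h2ec : ∀ X : Finset V, X ≠ ∅ → X ≠ Finset.univ → 2 ≤ cutDeg ends X)
    (hcactus : ∀ e : E, ∃! C : Finset E, IsCircuit ends C ∧ e ∈ C)
    {u : V} (hu : ¬ IsCornerNode ends u) :
    ∃ (a b : V) (compA compB : Finset V),
      a ∈ compA ∧ b ∈ compB ∧ u ∉ compA ∧ u ∉ compB ∧
      (∀ w, w ∈ compA → w ∈ compB → False) ∧
      (∀ w : V, w = u ∨ w ∈ compA ∨ w ∈ compB) ∧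
      IsMinCut ends compA ∧ IsMinCut ends compB ∧
      (∀ X, IsMinCut ends X → u ∈ X → a ∉ X → X = compB ∪ {u}) ∧
      (∀ X, IsMinCut ends X → u ∈ X → b ∉ X → X = compA ∪ {u}) ∧
      (∀ X, IsMinCut ends X → u ∈ X → compA ⊆ X ∨ compB ⊆ X) := by
  classical
  have hdeg : mDegree ends u ≠ 2 := fun h => hu (Or.inl h)
  have hbranch : ¬ IsBranchNode ends u := fun h => hu (Or.inr h)
  -- degree of u is at least 2
  have hcross_u : ∀ e, CrossesEdge ends ({u} : Finset V) e ↔ u ∈ ends e := by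
    intro e
    constructor
    · rintro ⟨z, z', h, hz, hz'⟩
      rw [Finset.mem_singleton] at hz
      subst hz
      rw [h]
      exact Sym2.mem_mk_left _ _
    · intro h
      obtain ⟨w', hw'⟩ := Sym2.mem_iff_exists.1 h
      have hne : w' ≠ u := by
        intro heq
        apply hloopless e
        rw [hw', heq]
        exact Sym2.mk_isDiag_iff.2 rfl
      exact ⟨u, w', hw', Finset.mem_singleton_self u, by simp [hne]⟩
  have hcut_deg : cutDeg ends ({u} : Finset V) = mDegree ends u := by
    unfold cutDeg mDegree
    congr 1
    apply Finset.filter_congr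
    intro e _
    simp [hcross_u e]
  have hune : ({u} : Finset V) ≠ Finset.univ := by
    obtain ⟨w, hw⟩ := Fintype.exists_ne_of_one_lt_card (by omega) u
    intro h
    have : w ∈ ({u} : Finset V) := h ▸ Finset.mem_univ w
    exact hw (Finset.mem_singleton.1 this)
  have hdeg2 : 2 ≤ mDegree ends u := by
    rw [← hcut_deg]
    exact h2ec _ (Finset.singleton_ne_empty u) hune
  have hdeg3 : 3 ≤ mDegree ends u := by omega
  -- uniqueness helper
  have uniq : ∀ (e : E) (C C' : Finset E), IsCircuit ends C → e ∈ C →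
      IsCircuit ends C' → e ∈ C' → C = C' := by
    intro e C C' h1 h2 h3 h4
    exact ((hcactus e).unique ⟨h1, h2⟩ ⟨h3, h4⟩)
  -- first circuit
  have : (Finset.univ.filter (fun e : E => u ∈ ends e)).Nonempty := by
    rw [← Finset.card_pos]
    unfold mDegree at hdeg3
    omega
  obtain ⟨g1, hg1mem⟩ := this
  have hg1u : u ∈ ends g1 := (Finset.mem_filter.1 hg1mem).2
  obtain ⟨C1, ⟨hC1circ, hg1C1⟩, _⟩ := hcactus g1
  -- second circuit
  have hnotall : ¬ ∀ e', u ∈ ends e' → e' ∈ C1 := by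
    intro hall
    have := circuit_incident_le_two hC1circ u hall
    omega
  push_neg at hnotall
  obtain ⟨g2, hg2u, hg2C1⟩ := hnotall
  obtain ⟨C2, ⟨hC2circ, hg2C2⟩, _⟩ := hcactus g2
  have hC1C2 : C1 ≠ C2 := by
    intro h
    exact hg2C1 (h ▸ hg2C2)
  have hdisjC : ∀ e, e ∈ C1 → e ∈ C2 → False := by
    intro e h1 h2
    exact hC1C2 (uniq e C1 C2 hC1circ h1 hC2circ h2)
  have hInc1 : IncidentCircuit ends u C1 := ⟨hC1circ, g1, hg1C1, hg1u⟩
  have hInc2 : IncidentCircuit ends u C2 := ⟨hC2circ, g2, hg2C2, hg2u⟩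
  -- both are 2-circuits
  have hcard12 : C1.card = 2 ∧ C2.card = 2 := by
    by_contra hcon
    exact hbranch (Or.inr ⟨C1, C2, hC1C2, hInc1, hInc2, hcon⟩)
  -- structure of the two 2-circuits
  obtain ⟨p1, p2, a, hC1eq, hp12, hau, hendsp1, hendsp2⟩ :=
    circuit_card_two hC1circ hcard12.1 hg1C1 hg1u
  obtain ⟨q1, q2, b, hC2eq, hq12, hbu, hendsq1, hendsq2⟩ :=
    circuit_card_two hC2circ hcard12.2 hg2C2 hg2u
  have hendsC1 : ∀ e ∈ C1, ends e = s(u, a) := by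
    intro e he
    rw [hC1eq] at he
    rcases Finset.mem_insert.1 he with rfl | he
    · exact hendsp1
    · rw [Finset.mem_singleton.1 he]
      exact hendsp2
  have hendsC2 : ∀ e ∈ C2, ends e = s(u, b) := by
    intro e he
    rw [hC2eq] at he
    rcases Finset.mem_insert.1 he with rfl | he
    · exact hendsq1
    · rw [Finset.mem_singleton.1 he]
      exact hendsq2
  have hp1C1 : p1 ∈ C1 := by rw [hC1eq]; simp
  have hp2C1 : p2 ∈ C1 := by rw [hC1eq]; simp
  have hq1C2 : q1 ∈ C2 := by rw [hC2eq]; simp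
  have hq2C2 : q2 ∈ C2 := by rw [hC2eq]; simp
  have hmemC1 : ∀ e, e ∈ C1 ↔ (e = p1 ∨ e = p2) := by
    intro e
    rw [hC1eq]; simp
  have hmemC2 : ∀ e, e ∈ C2 ↔ (e = q1 ∨ e = q2) := by
    intro e
    rw [hC2eq]; simp
  have hIncAll : ∀ e', u ∈ ends e' → e' ∈ C1 ∨ e' ∈ C2 := by
    intro e' hue'
    by_contra hcon
    push_neg at hcon
    obtain ⟨C3, ⟨hC3circ, he'C3⟩, _⟩ := hcactus e'
    have h31 : C3 ≠ C1 := fun h => hcon.1 (h ▸ he'C3)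
    have h32 : C3 ≠ C2 := fun h => hcon.2 (h ▸ he'C3)
    exact hbranch (Or.inl ⟨C1, C2, C3, hC1C2, h31.symm, h32.symm, hInc1, hInc2,
      ⟨hC3circ, e', he'C3, hue'⟩⟩)
  -- a ≠ b
  have hpq : p1 ≠ q1 := by
    intro h
    exact hdisjC p1 hp1C1 (h ▸ hq1C2)
  have hab : a ≠ b := by
    intro hEq
    subst hEq
    -- build the 2-circuit {p1, q1}
    set e2 : Fin 2 → E := fun i => if i.val = 0 then p1 else q1 with he2
    set v2 : Fin 2 → V := fun i => if i.val = 0 then u else a with hv2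
    have hcirc : IsCircuit ends (Finset.image e2 Finset.univ) := by
      refine ⟨2, le_refl 2, e2, v2, ?_, ?_, ?_, rfl⟩
      · intro i j hij
        rw [he2] at hij
        simp only at hij
        by_cases h1 : i.val = 0 <;> by_cases h2 : j.val = 0
        · apply Fin.ext; omega
        · rw [if_pos h1, if_neg h2] at hij; exact absurd hij hpq
        · rw [if_neg h1, if_pos h2] at hij; exact absurd hij.symm hpq
        · apply Fin.ext; have := i.isLt; have := j.isLt; omega
      · intro i j hij
        rw [hv2] at hij
        simp only at hij
        by_cases h1 : i.val = 0 <;> by_cases h2 : j.val = 0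
        · apply Fin.ext; omega
        · rw [if_pos h1, if_neg h2] at hij; exact absurd hij.symm hau
        · rw [if_neg h1, if_pos h2] at hij; exact absurd hij hau
        · apply Fin.ext; have := i.isLt; have := j.isLt; omega
      · intro i
        by_cases h1 : i.val = 0
        · have hidx : (⟨(i.val + 1) % 2, Nat.mod_lt _ (by omega)⟩ : Fin 2)
              = ⟨1, by omega⟩ := Fin.ext (by simp [h1])
          have he2i : e2 i = p1 := by rw [he2]; simp [h1]
          have hv2i : v2 i = u := by rw [hv2]; simp [h1]
          have hv2s : v2 ⟨1, by omega⟩ = a := by simp [hv2]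
          rw [he2i, hv2i, hidx, hv2s, hendsp1]
        · have h1' : i.val = 1 := by have := i.isLt; omega
          have hidx : (⟨(i.val + 1) % 2, Nat.mod_lt _ (by omega)⟩ : Fin 2)
              = ⟨0, by omega⟩ := Fin.ext (by rw [h1'])
          have he2i : e2 i = q1 := by rw [he2]; simp [h1]
          have hv2i : v2 i = a := by rw [hv2]; simp [h1]
          have hv2s : v2 ⟨0, by omega⟩ = u := by simp [hv2]
          rw [he2i, hv2i, hidx, hv2s, hendsq1, Sym2.eq_swap]
    have hp1mem : p1 ∈ Finset.image e2 Finset.univ :=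
      Finset.mem_image.2 ⟨⟨0, by omega⟩, Finset.mem_univ _, by simp [he2]⟩
    have hq1mem : q1 ∈ Finset.image e2 Finset.univ :=
      Finset.mem_image.2 ⟨⟨1, by omega⟩, Finset.mem_univ _, by simp [he2]⟩
    have := uniq p1 (Finset.image e2 Finset.univ) C1 hcirc hp1mem hC1circ hp1C1
    rw [this] at hq1mem
    exact hdisjC q1 hq1mem hq1C2
  -- components
  set P' : E → Prop := fun e => e ∉ C1 ∧ e ∉ C2 with hP'
  set compA : Finset V := Finset.univ.filter (Reach ends P' a) with hcompA
  set compB : Finset V := Finset.univ.filter (Reach ends P' b) with hcompB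
  have hmemA : ∀ w, w ∈ compA ↔ Reach ends P' a w := by
    intro w; rw [hcompA]; simp
  have hmemB : ∀ w, w ∈ compB ↔ Reach ends P' b w := by
    intro w; rw [hcompB]; simp
  have haA : a ∈ compA := (hmemA a).2 Relation.ReflTransGen.refl
  have hbB : b ∈ compB := (hmemB b).2 Relation.ReflTransGen.refl
  have hreachu : ∀ x : V, x ≠ u → ¬ Reach ends P' x u := by
    intro x hx hr
    rcases Relation.ReflTransGen.cases_tail hr with h | ⟨c, _, hstep⟩
    · exact hx h.symm
    · obtain ⟨e, hPe, he⟩ := hstep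
      have : u ∈ ends e := by rw [he]; exact Sym2.mem_mk_right _ _
      rcases hIncAll e this with h | h
      · exact hPe.1 h
      · exact hPe.2 h
  have huA : u ∉ compA := by
    rw [hmemA]
    exact hreachu a (fun h => hau h)
  have huB : u ∉ compB := by
    rw [hmemB]
    exact hreachu b (fun h => hbu h)
  -- edges not incident to u are not in C1 ∪ C2
  have hnotu_P' : ∀ (e : E) (x y : V), ends e = s(x, y) → x ≠ u → y ≠ u → P' e := by
    intro e x y he hx hy
    constructor
    · intro hmem
      have := hendsC1 e hmem
      rw [he] at this
      rcases Sym2.eq_iff.1 this with ⟨h1, _⟩ | ⟨_, h2⟩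
      · exact hx h1
      · exact hy h2
    · intro hmem
      have := hendsC2 e hmem
      rw [he] at this
      rcases Sym2.eq_iff.1 this with ⟨h1, _⟩ | ⟨_, h2⟩
      · exact hx h1
      · exact hy h2
  -- partition
  have hpart : ∀ w : V, w = u ∨ w ∈ compA ∨ w ∈ compB := by
    intro w
    by_cases hw : w = u
    · exact Or.inl hw
    right
    obtain ⟨n, f, hinj, h0, hn, hsteps⟩ :=
      injPath_of_reach (reach_global ends h2ec w u)
    have hn0 : n ≠ 0 := by
      intro h
      subst h
      rw [h0] at hn
      exact hw hn
    have hfne : ∀ k, k ≤ n - 1 → f k ≠ u := by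
      intro k hk heq
      have : k = n := hinj k n (by omega) (le_refl n) (by rw [heq, hn])
      omega
    have hsteps' : ∀ i, i < n - 1 → ∃ e, P' e ∧ ends e = s(f i, f (i + 1)) := by
      intro i hi
      obtain ⟨e, _, he⟩ := hsteps i (by omega)
      exact ⟨e, hnotu_P' e _ _ he (hfne i (by omega)) (hfne (i + 1) (by omega)), he⟩
    have hrpre : Reach ends P' w (f (n - 1)) := by
      have := reach_of_injPath_prefix hsteps' (n - 1) (le_refl _)
      rwa [h0] at this
    obtain ⟨elast, _, helast⟩ := hsteps (n - 1) (by omega)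
    have helast' : ends elast = s(f (n - 1), u) := by
      rw [show n - 1 + 1 = n from by omega] at helast
      rw [helast, hn]
    have huel : u ∈ ends elast := by
      rw [helast']
      exact Sym2.mem_mk_right _ _
    rcases hIncAll elast huel with hmem | hmem
    · left
      rw [hmemA]
      have := hendsC1 elast hmem
      rw [helast'] at this
      have hfa : f (n - 1) = a := by
        rcases Sym2.eq_iff.1 this with ⟨h1, _⟩ | ⟨h1, _⟩
        · exact absurd h1 (hfne (n - 1) (le_refl _))
        · exact h1
      rw [hfa] at hrpre
      exact reach_symm hrpre
    · right
      rw [hmemB]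
      have := hendsC2 elast hmem
      rw [helast'] at this
      have hfb : f (n - 1) = b := by
        rcases Sym2.eq_iff.1 this with ⟨h1, _⟩ | ⟨h1, _⟩
        · exact absurd h1 (hfne (n - 1) (le_refl _))
        · exact h1
      rw [hfb] at hrpre
      exact reach_symm hrpre
  -- disjointness
  have hdisjAB : ∀ w, w ∈ compA → w ∈ compB → False := by
    intro w hwA hwB
    have hrab : Reach ends P' a b :=
      reach_trans ((hmemA w).1 hwA) (reach_symm ((hmemB w).1 hwB))
    obtain ⟨n, f, hinj, h0, hn, hsteps⟩ := injPath_of_reach hrab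
    have hfu : ∀ k, k ≤ n → f k ≠ u := by
      intro k hk heq
      have : Reach ends P' a (f k) := by
        have := reach_of_injPath_prefix
          (fun i hi => hsteps i (by omega)) k hk
        rwa [h0] at this
      rw [heq] at this
      exact hreachu a (fun h => hau h) this
    have hsteps2 : ∀ i, i < n → ∃ e, (e ≠ p1 ∧ e ≠ q1 ∧ (∀ w', w' ∈ ends e → w' ≠ u)) ∧
        ends e = s(f i, f (i + 1)) := by
      intro i hi
      obtain ⟨e, hPe, he⟩ := hsteps i hi
      refine ⟨e, ⟨?_, ?_, ?_⟩, he⟩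
      · intro h; exact hPe.1 (h ▸ hp1C1)
      · intro h; exact hPe.2 (h ▸ hq1C2)
      · intro w' hw' heq
        subst heq
        rcases hIncAll e hw' with h | h
        · exact hPe.1 h
        · exact hPe.2 h
    obtain ⟨D, hDcirc, hp1D, hq1D⟩ :=
      circuit_of_path hpq hendsp1 hendsq1 hinj h0 hn hsteps2 hfu
    have := uniq p1 D C1 hDcirc hp1D hC1circ hp1C1
    rw [this] at hq1D
    exact hdisjC q1 hq1D hq1C2
  -- crossing edges of compA are exactly p1 p2
  have hreach_extend : ∀ (c0 : V) (w z : V) (e : E), Reach ends P' c0 w → P' e →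
      ends e = s(w, z) → Reach ends P' c0 z := by
    intro c0 w z e hr hPe he
    exact hr.tail ⟨e, hPe, he⟩
  have crossA : ∀ e, CrossesEdge ends compA e → e = p1 ∨ e = p2 := by
    intro e ⟨z, z', he, hz, hz'⟩
    by_cases hPe : P' e
    · exfalso
      apply hz'
      rw [hmemA] at hz ⊢
      exact hreach_extend a z z' e hz hPe he
    · have hor : e ∈ C1 ∨ e ∈ C2 := by
        by_contra hc
        push_neg at hc
        exact hPe ⟨hc.1, hc.2⟩
      rcases hor with h1 | h2
      · exact (hmemC1 e).1 h1
      · exfalso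
        have hE := hendsC2 e h2
        rw [he] at hE
        rcases Sym2.eq_iff.1 hE with ⟨h3, _⟩ | ⟨h3, _⟩
        · rw [h3] at hz; exact huA hz
        · rw [h3] at hz; exact hdisjAB b hz hbB
  have crossB : ∀ e, CrossesEdge ends compB e → e = q1 ∨ e = q2 := by
    intro e ⟨z, z', he, hz, hz'⟩
    by_cases hPe : P' e
    · exfalso
      apply hz'
      rw [hmemB] at hz ⊢
      exact hreach_extend b z z' e hz hPe he
    · have hor : e ∈ C1 ∨ e ∈ C2 := by
        by_contra hc
        push_neg at hc
        exact hPe ⟨hc.1, hc.2⟩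
      rcases hor with h1 | h2
      · exfalso
        have hE := hendsC1 e h1
        rw [he] at hE
        rcases Sym2.eq_iff.1 hE with ⟨h3, _⟩ | ⟨h3, _⟩
        · rw [h3] at hz; exact huB hz
        · rw [h3] at hz; exact hdisjAB a haA hz
      · exact (hmemC2 e).1 h2
  -- p1, p2 cross compA ; q1, q2 cross compB
  have hcrossp : ∀ e, e ∈ C1 → CrossesEdge ends compA e := by
    intro e he
    exact ⟨a, u, by rw [hendsC1 e he, Sym2.eq_swap], haA, huA⟩
  have hcrossq : ∀ e, e ∈ C2 → CrossesEdge ends compB e := by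
    intro e he
    exact ⟨b, u, by rw [hendsC2 e he, Sym2.eq_swap], hbB, huB⟩
  -- compA and compB are min cuts
  have hcsetA : Finset.univ.filter (CrossesEdge ends compA) = {p1, p2} := by
    apply Finset.Subset.antisymm
    · intro e he
      rcases crossA e (Finset.mem_filter.1 he).2 with h | h
      · simp [h]
      · simp [h]
    · intro e he
      rcases Finset.mem_insert.1 he with rfl | he'
      · exact Finset.mem_filter.2 ⟨Finset.mem_univ _, hcrossp _ hp1C1⟩
      · rw [Finset.mem_singleton.1 he']
        exact Finset.mem_filter.2 ⟨Finset.mem_univ _, hcrossp _ hp2C1⟩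
  have hcsetB : Finset.univ.filter (CrossesEdge ends compB) = {q1, q2} := by
    apply Finset.Subset.antisymm
    · intro e he
      rcases crossB e (Finset.mem_filter.1 he).2 with h | h
      · simp [h]
      · simp [h]
    · intro e he
      rcases Finset.mem_insert.1 he with rfl | he'
      · exact Finset.mem_filter.2 ⟨Finset.mem_univ _, hcrossq _ hq1C2⟩
      · rw [Finset.mem_singleton.1 he']
        exact Finset.mem_filter.2 ⟨Finset.mem_univ _, hcrossq _ hq2C2⟩
  have hminA : IsMinCut ends compA := by
    refine ⟨Finset.ne_empty_of_mem haA, ?_, ?_⟩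
    · intro h
      exact huA (h ▸ Finset.mem_univ u)
    · unfold cutDeg
      rw [hcsetA]
      rw [Finset.card_insert_of_notMem (by simp [hp12]), Finset.card_singleton]
  have hminB : IsMinCut ends compB := by
    refine ⟨Finset.ne_empty_of_mem hbB, ?_, ?_⟩
    · intro h
      exact huB (h ▸ Finset.mem_univ u)
    · unfold cutDeg
      rw [hcsetB]
      rw [Finset.card_insert_of_notMem (by simp [hq12]), Finset.card_singleton]
  -- crossing set of a min cut containing two given crossing edges
  have hcset_gen : ∀ (X : Finset V) (g g' : E), IsMinCut ends X → g ≠ g' →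
      CrossesEdge ends X g → CrossesEdge ends X g' →
      Finset.univ.filter (CrossesEdge ends X) = {g, g'} := by
    intro X g g' hX hne hg hg'
    symm
    apply Finset.eq_of_subset_of_card_le
    · intro e he
      rcases Finset.mem_insert.1 he with rfl | he'
      · exact Finset.mem_filter.2 ⟨Finset.mem_univ _, hg⟩
      · rw [Finset.mem_singleton.1 he']
        exact Finset.mem_filter.2 ⟨Finset.mem_univ _, hg'⟩
    · have : (Finset.univ.filter (CrossesEdge ends X)).card = 2 := hX.2.2
      rw [this]
      rw [Finset.card_insert_of_notMem (by simp [hne]), Finset.card_singleton]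
  -- the two K2 lemmas
  have hK2a : ∀ X, IsMinCut ends X → u ∈ X → a ∉ X → X = compB ∪ {u} := by
    intro X hX huX haX
    have hcr1 : CrossesEdge ends X p1 := ⟨u, a, hendsp1, huX, haX⟩
    have hcr2 : CrossesEdge ends X p2 := ⟨u, a, hendsp2, huX, haX⟩
    have hcset : Finset.univ.filter (CrossesEdge ends X) = {p1, p2} :=
      hcset_gen X p1 p2 hX hp12 hcr1 hcr2
    have hnocross : ∀ e, ¬ e ∈ C1 → ¬ CrossesEdge ends X e := by
      intro e he hc
      have : e ∈ Finset.univ.filter (CrossesEdge ends X) :=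
        Finset.mem_filter.2 ⟨Finset.mem_univ _, hc⟩
      rw [hcset] at this
      rcases Finset.mem_insert.1 this with rfl | h
      · exact he hp1C1
      · rw [Finset.mem_singleton.1 h] at he
        exact he hp2C1
    have hstepiff : ∀ (e : E) (pp qq : V), P' e → ends e = s(pp, qq) →
        (pp ∈ X ↔ qq ∈ X) := by
      intro e pp qq hPe he
      exact (not_crossesEdge_iff ends he).1 (hnocross e hPe.1)
    have hbX : b ∈ X := by
      have hq1n : ¬ CrossesEdge ends X q1 := by
        apply hnocross
        intro h
        exact hdisjC q1 h hq1C2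
      have := (not_crossesEdge_iff ends hendsq1).1 hq1n
      exact this.1 huX
    apply Finset.Subset.antisymm
    · intro w hw
      rcases hpart w with rfl | hwA | hwB
      · exact Finset.mem_union_right _ (Finset.mem_singleton_self w)
      · exfalso
        have := reach_mem_iff (X := X) hstepiff ((hmemA w).1 hwA)
        exact haX (this.2 hw)
      · exact Finset.mem_union_left _ hwB
    · intro w hw
      rcases Finset.mem_union.1 hw with hw | hw
      · have := reach_mem_iff (X := X) hstepiff ((hmemB w).1 hw)
        exact this.1 hbX
      · rw [Finset.mem_singleton.1 hw]
        exact huX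
  have hK2b : ∀ X, IsMinCut ends X → u ∈ X → b ∉ X → X = compA ∪ {u} := by
    intro X hX huX hbX
    have hcr1 : CrossesEdge ends X q1 := ⟨u, b, hendsq1, huX, hbX⟩
    have hcr2 : CrossesEdge ends X q2 := ⟨u, b, hendsq2, huX, hbX⟩
    have hcset : Finset.univ.filter (CrossesEdge ends X) = {q1, q2} :=
      hcset_gen X q1 q2 hX hq12 hcr1 hcr2
    have hnocross : ∀ e, ¬ e ∈ C2 → ¬ CrossesEdge ends X e := by
      intro e he hc
      have : e ∈ Finset.univ.filter (CrossesEdge ends X) :=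
        Finset.mem_filter.2 ⟨Finset.mem_univ _, hc⟩
      rw [hcset] at this
      rcases Finset.mem_insert.1 this with rfl | h
      · exact he hq1C2
      · rw [Finset.mem_singleton.1 h] at he
        exact he hq2C2
    have hstepiff : ∀ (e : E) (pp qq : V), P' e → ends e = s(pp, qq) →
        (pp ∈ X ↔ qq ∈ X) := by
      intro e pp qq hPe he
      exact (not_crossesEdge_iff ends he).1 (hnocross e hPe.2)
    have haX : a ∈ X := by
      have hp1n : ¬ CrossesEdge ends X p1 := by
        apply hnocross
        intro h
        exact hdisjC p1 hp1C1 h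
      have := (not_crossesEdge_iff ends hendsp1).1 hp1n
      exact this.1 huX
    apply Finset.Subset.antisymm
    · intro w hw
      rcases hpart w with rfl | hwA | hwB
      · exact Finset.mem_union_right _ (Finset.mem_singleton_self w)
      · exact Finset.mem_union_left _ hwA
      · exfalso
        have := reach_mem_iff (X := X) hstepiff ((hmemB w).1 hwB)
        exact hbX (this.2 hw)
    · intro w hw
      rcases Finset.mem_union.1 hw with hw | hw
      · have := reach_mem_iff (X := X) hstepiff ((hmemA w).1 hw)
        exact this.1 haX
      · rw [Finset.mem_singleton.1 hw]
        exact huX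
  -- K3
  have hK3 : ∀ X, IsMinCut ends X → u ∈ X → compA ⊆ X ∨ compB ⊆ X := by
    intro X hX huX
    by_cases haX : a ∈ X
    · by_cases hbX : b ∈ X
      · by_contra hcon
        push_neg at hcon
        obtain ⟨hconA, hconB⟩ := hcon
        obtain ⟨v', hv'A, hv'X⟩ := Finset.not_subset.1 hconA
        obtain ⟨y, hyB, hyX⟩ := Finset.not_subset.1 hconB
        obtain ⟨gg1, z1, z1', hP1, hge1, hz1X, hz1'X, hr1, hr1'⟩ :=
          cross_of_reach ((hmemA v').1 hv'A) haX hv'X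
        obtain ⟨gg2, z2, z2', hP2, hge2, hz2X, hz2'X, hr2, hr2'⟩ :=
          cross_of_reach ((hmemB y).1 hyB) hbX hyX
        have hz1A : z1 ∈ compA := (hmemA z1).2 hr1
        have hz1'A : z1' ∈ compA := (hmemA z1').2 hr1'
        have hz2B : z2 ∈ compB := (hmemB z2).2 hr2
        have hz2'B : z2' ∈ compB := (hmemB z2').2 hr2'
        have hgg12 : gg1 ≠ gg2 := by
          intro h
          have heq : s(z1, z1') = s(z2, z2') := by rw [← hge1, h, hge2]
          rcases Sym2.eq_iff.1 heq with ⟨h1, h2⟩ | ⟨h1, h2⟩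
          · exact hdisjAB z1 hz1A (h1 ▸ hz2B)
          · exact hz2'X (h1 ▸ hz1X)
        have hc1 : CrossesEdge ends X gg1 := ⟨z1, z1', hge1, hz1X, hz1'X⟩
        have hc2 : CrossesEdge ends X gg2 := ⟨z2, z2', hge2, hz2X, hz2'X⟩
        have hcset := hcset_gen X gg1 gg2 hX hgg12 hc1 hc2
        obtain ⟨D, ⟨hDcirc, hg1D⟩, _⟩ := hcactus gg1
        obtain ⟨m', hm', e', v'', einj', vinj', hends', hDim⟩ := id hDcirc
        have hmemD : gg1 ∈ Finset.image e' Finset.univ := hDim ▸ hg1D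
        obtain ⟨i1, _, hei1⟩ := Finset.mem_image.1 hmemD
        have hce : CrossesEdge ends X (e' i1) := by rw [hei1]; exact hc1
        obtain ⟨j, hji, hcj⟩ := exists_second_cross hm' einj' vinj' hends' X i1 hce
        have hej : e' j ∈ Finset.univ.filter (CrossesEdge ends X) :=
          Finset.mem_filter.2 ⟨Finset.mem_univ _, hcj⟩
        rw [hcset] at hej
        have hejg2 : e' j = gg2 := by
          rcases Finset.mem_insert.1 hej with h | h
          · exfalso; exact hji (einj' (by rw [h, ← hei1]))
          · exact Finset.mem_singleton.1 h
        have hvi1 : v'' i1 ∈ compA := by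
          have h1 := hends' i1
          rw [hei1, hge1] at h1
          rcases Sym2.eq_iff.1 h1 with ⟨h2, _⟩ | ⟨_, h2⟩
          · exact h2 ▸ hz1A
          · exact h2 ▸ hz1'A
        have hvjB : v'' j ∈ compB := by
          have h1 := hends' j
          rw [hejg2, hge2] at h1
          rcases Sym2.eq_iff.1 h1 with ⟨h2, _⟩ | ⟨_, h2⟩
          · exact h2 ▸ hz2B
          · exact h2 ▸ hz2'B
        have hvjA : v'' j ∉ compA := fun h => hdisjAB _ h hvjB
        obtain ⟨k, hk⟩ := exists_switch hm' hends' compA i1 j hvi1 hvjA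
        have hekC1 : e' k ∈ C1 := by
          rcases crossA _ hk with h | h
          · rw [h]; exact hp1C1
          · rw [h]; exact hp2C1
        have hekD : e' k ∈ D := by
          rw [hDim]
          exact Finset.mem_image.2 ⟨k, Finset.mem_univ _, rfl⟩
        have hDC1 : D = C1 := uniq (e' k) D C1 hDcirc hekD hC1circ hekC1
        have hg1C1' : gg1 ∈ C1 := hDC1 ▸ hg1D
        have := hendsC1 gg1 hg1C1'
        rw [hge1] at this
        rcases Sym2.eq_iff.1 this with ⟨h2, _⟩ | ⟨_, h2⟩
        · exact huA (h2 ▸ hz1A)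
        · exact huA (h2 ▸ hz1'A)
      · exact Or.inl (by
          have := hK2b X hX huX hbX
          rw [this]
          exact Finset.subset_union_left)
    · exact Or.inr (by
        have := hK2a X hX huX haX
        rw [this]
        exact Finset.subset_union_left)
  exact ⟨a, b, compA, compB, haA, hbB, huA, huB, hdisjAB, hpart, hminA, hminB,
    hK2a, hK2b, hK3⟩

end CactusAux

namespace CactusAux
set_option linter.unusedSectionVars false
set_option maxHeartbeats 2000000

variable {V E : Type*} [Fintype V] [Fintype E]

noncomputable def phi1 (ends : E → Sym2 V) (l : V × V × ℕ) : ℕ :=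
  (if IsCornerNode ends l.1 then 0 else 1) + (if IsCornerNode ends l.2.1 then 0 else 1)

noncomputable def covSet (ends : E → Sym2 V) (l : V × V × ℕ) : Finset (Finset V) :=
  Finset.univ.filter (fun X => IsMinCut ends X ∧ Covers l X)

noncomputable def Phi1 (ends : E → Sym2 V) (F : Finset (V × V × ℕ)) : ℕ :=
  ∑ l ∈ F, phi1 ends l

noncomputable def Phi2 (ends : E → Sym2 V) (F : Finset (V × V × ℕ)) : ℕ :=
  ∑ l ∈ F, (covSet ends l).card

/-- The key improvement step, for a link whose first endpoint `u` is not a corner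
node, in the case where the second endpoint lies in `compA`. -/
lemma improve_side (ends : E → Sym2 V) (p : ℕ) (c : V → V → ℕ → ℝ≥0∞)
    (hsymm : ∀ x y t, c x y t = c y x t) (hmetric : IsMetricInstance ends p c)
    {F : Finset (V × V × ℕ)} (hF : Feasible ends p F)
    {u v : V} {t : ℕ} (hlF : (u, v, t) ∈ F) (hnc : ¬ IsCornerNode ends u)
    {a : V} {compA compB : Finset V}
    (haA : a ∈ compA) (huA : u ∉ compA) (huB : u ∉ compB)
    (hdisj : ∀ w, w ∈ compA → w ∈ compB → False)
    (hpart : ∀ w : V, w = u ∨ w ∈ compA ∨ w ∈ compB)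
    (hminA : IsMinCut ends compA) (hminB : IsMinCut ends compB)
    (hK2a : ∀ X, IsMinCut ends X → u ∈ X → a ∉ X → X = compB ∪ {u})
    (hK3 : ∀ X, IsMinCut ends X → u ∈ X → compA ⊆ X ∨ compB ⊆ X)
    (hvA : v ∈ compA) :
    ∃ F', Feasible ends p F' ∧ linkCost c F' ≤ linkCost c F ∧
      (Phi1 ends F' < Phi1 ends F ∨
        (Phi1 ends F' ≤ Phi1 ends F ∧ Phi2 ends F' < Phi2 ends F)) := by
  classical
  have hval : ValidLink p (u, v, t) := hF.1 _ hlF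
  have huv : u ≠ v := hval.1
  have ht1 : 1 ≤ t := hval.2.1
  have htp : t ≤ p := hval.2.2
  -- the link (u,v,t) does not cover compB, so another link covers it
  have hnotcov : ¬ Covers (u, v, t) compB := by
    rintro (⟨h1, h2⟩ | ⟨h1, h2⟩)
    · exact huB h1
    · exact hdisj v hvA h1
  obtain ⟨l'', hl''F, hl''cov⟩ := hF.2.2 compB hminB
  have hlne : l'' ≠ (u, v, t) := fun h => hnotcov (h ▸ hl''cov)
  obtain ⟨x, y, hxy, hyB, hxB⟩ : ∃ x y, (l''.1 = x ∧ l''.2.1 = y ∨ l''.1 = y ∧ l''.2.1 = x)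
      ∧ y ∈ compB ∧ x ∉ compB := by
    rcases hl''cov with ⟨h1, h2⟩ | ⟨h1, h2⟩
    · exact ⟨l''.2.1, l''.1, Or.inr ⟨rfl, rfl⟩, h1, h2⟩
    · exact ⟨l''.1, l''.2.1, Or.inl ⟨rfl, rfl⟩, h1, h2⟩
  set s : ℕ := l''.2.2 with hs
  have hval'' : ValidLink p l'' := hF.1 _ hl''F
  have hs1 : 1 ≤ s := hval''.2.1
  have hcovl'' : ∀ Z : Finset V, Covers l'' Z ↔ Xor' (x ∈ Z) (y ∈ Z) := by
    intro Z
    rcases hxy with ⟨h1, h2⟩ | ⟨h1, h2⟩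
    · unfold Covers; rw [h1, h2]
    · unfold Covers; rw [h1, h2, Xor', xor_comm]
  have hcostl'' : c l''.1 l''.2.1 s = c x y s := by
    rcases hxy with ⟨h1, h2⟩ | ⟨h1, h2⟩
    · rw [h1, h2]
    · rw [h1, h2, hsymm]
  have hyu : y ≠ u := fun h => huB (h ▸ hyB)
  have hyv : y ≠ v := fun h => hdisj v hvA (h ▸ hyB)
  have hvu : v ≠ u := fun h => huA (h ▸ hvA)
  -- weights
  have hwsum : t + (s + ∑ l ∈ (F.erase (u, v, t)).erase l'', l.2.2) = ∑ l ∈ F, l.2.2 := by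
    have h2 : (u, v, t).2.2 + ∑ l ∈ F.erase (u, v, t), l.2.2 = ∑ l ∈ F, l.2.2 :=
      Finset.add_sum_erase F (fun l => l.2.2) hlF
    have h3 : l''.2.2 + ∑ l ∈ (F.erase (u, v, t)).erase l'', l.2.2
        = ∑ l ∈ F.erase (u, v, t), l.2.2 :=
      Finset.add_sum_erase _ (fun l => l.2.2) (Finset.mem_erase.2 ⟨hlne, hl''F⟩)
    rw [← h2, ← h3]
  have hts : t + s ≤ p := by
    have := hF.2.1
    omega
  -- Phi1 decomposition
  have hPhi1F : Phi1 ends F = phi1 ends (u, v, t) + (phi1 ends l'' +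
      Phi1 ends ((F.erase (u, v, t)).erase l'')) := by
    unfold Phi1
    rw [Finset.add_sum_erase _ (phi1 ends) (Finset.mem_erase.2 ⟨hlne, hl''F⟩)]
    rw [Finset.add_sum_erase _ (phi1 ends) hlF]
  have hPhi1F' : Phi1 ends F = phi1 ends (u, v, t) + Phi1 ends (F.erase (u, v, t)) := by
    unfold Phi1
    rw [Finset.add_sum_erase _ (phi1 ends) hlF]
  have hPhi2F' : Phi2 ends F = (covSet ends (u, v, t)).card
      + Phi2 ends (F.erase (u, v, t)) := by
    unfold Phi2
    rw [Finset.add_sum_erase _ (fun l => (covSet ends l).card) hlF]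
  have hphil : phi1 ends (u, v, t) = 1 + (if IsCornerNode ends v then 0 else 1) := by
    unfold phi1
    rw [if_neg hnc]
  -- complement helper for coverage transfer
  have hcompl_cov : ∀ (l0 : V × V × ℕ) (X : Finset V), Covers l0 Xᶜ ↔ Covers l0 X :=
    fun l0 X => covers_compl
  -- case distinction on x
  have hxAu : x = u ∨ x ∈ compA := by
    rcases hpart x with h | h | h
    · exact Or.inl h
    · exact Or.inr h
    · exact absurd h hxB
  rcases hxAu with hxu | hxA
  · -- CASE x = u : merge the two links into (y, v, t + s)
    set m : V × V × ℕ := (y, v, t + s) with hm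
    have hcore : ∀ X : Finset V, IsMinCut ends X → u ∈ X →
        (Covers (u, v, t) X ∨ Covers l'' X) → Covers m X := by
      intro X hX huX hc
      rcases hc with hc | hc
      · have hvX : v ∉ X := by
          rcases hc with ⟨h1, h2⟩ | ⟨h1, h2⟩
          · exact h2
          · exact absurd huX h2
        have hyX : y ∈ X := by
          rcases hK3 X hX huX with h | h
          · exact absurd (h hvA) hvX
          · exact h hyB
        exact Or.inl ⟨hyX, hvX⟩
      · rw [hcovl''] at hc
        have hyX : y ∉ X := by
          rcases hc with ⟨h1, h2⟩ | ⟨h1, h2⟩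
          · exact h2
          · exact absurd (hxu ▸ huX) h2
        have hvX : v ∈ X := by
          rcases hK3 X hX huX with h | h
          · exact h hvA
          · exact absurd (h hyB) hyX
        exact Or.inr ⟨hvX, hyX⟩
    have hcovm : ∀ X : Finset V, IsMinCut ends X →
        (Covers (u, v, t) X ∨ Covers l'' X) → Covers m X := by
      intro X hX hc
      by_cases huX : u ∈ X
      · exact hcore X hX huX hc
      · rw [← covers_compl (X := X) (l := m)]
        refine hcore Xᶜ (isMinCut_compl ends hX) (Finset.mem_compl.2 huX) ?_
        rcases hc with hc | hc
        · exact Or.inl (covers_compl.2 hc)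
        · exact Or.inr (covers_compl.2 hc)
    -- cost of the merged link
    have hcostm : c y v (t + s) ≤ c l''.1 l''.2.1 s + c u v t := by
      have h1 : c y v (t + s) ≤ c y u s + c u v t :=
        hmetric.2 y u v s t (t + s) hyu huv hyv hs1 ht1 hts (by omega)
      have h2 : c y u s = c x y s := by
        rw [hsymm, hxu]
      rw [hcostl'']
      rw [h2] at h1
      exact h1
    set S1 : Finset (V × V × ℕ) := (F.erase (u, v, t)).erase l'' with hS1
    set F' : Finset (V × V × ℕ) := insert m S1 with hF'
    have hS1F : S1 ⊆ F := fun z hz => Finset.mem_of_mem_erase (Finset.mem_of_mem_erase hz)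
    refine ⟨F', ⟨?_, ?_, ?_⟩, ?_, ?_⟩
    · -- validity
      intro l0 hl0
      rcases Finset.mem_insert.1 hl0 with rfl | hl0
      · refine ⟨hyv, ?_, hts⟩
        have hmw : m.2.2 = t + s := rfl
        omega
      · exact hF.1 _ (hS1F hl0)
    · -- weight
      by_cases hmS : m ∈ S1
      · rw [hF', Finset.insert_eq_self.2 hmS]
        calc ∑ l ∈ S1, l.2.2 ≤ ∑ l ∈ F, l.2.2 := Finset.sum_le_sum_of_subset hS1F
          _ ≤ p := hF.2.1
      · rw [hF', Finset.sum_insert hmS]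
        have h1 : m.2.2 = t + s := rfl
        have h2 := hF.2.1
        omega
    · -- coverage
      intro X hX
      obtain ⟨g, hgF, hgcov⟩ := hF.2.2 X hX
      by_cases hg1 : g = (u, v, t)
      · exact ⟨m, Finset.mem_insert_self _ _, hcovm X hX (Or.inl (hg1 ▸ hgcov))⟩
      · by_cases hg2 : g = l''
        · exact ⟨m, Finset.mem_insert_self _ _, hcovm X hX (Or.inr (hg2 ▸ hgcov))⟩
        · exact ⟨g, Finset.mem_insert_of_mem
            (Finset.mem_erase.2 ⟨hg2, Finset.mem_erase.2 ⟨hg1, hgF⟩⟩), hgcov⟩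
    · -- cost
      have e1 : linkCost c F = c u v t + (c l''.1 l''.2.1 s + linkCost c S1) := by
        unfold linkCost
        rw [Finset.add_sum_erase _ (fun l => c l.1 l.2.1 l.2.2)
          (Finset.mem_erase.2 ⟨hlne, hl''F⟩)]
        rw [Finset.add_sum_erase _ (fun l => c l.1 l.2.1 l.2.2) hlF]
      have e2 : linkCost c F' ≤ c y v (t + s) + linkCost c S1 := by
        by_cases hmS : m ∈ S1
        · rw [hF', Finset.insert_eq_self.2 hmS]
          exact le_add_self
        · rw [hF']
          unfold linkCost
          rw [Finset.sum_insert hmS]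
      calc linkCost c F' ≤ c y v (t + s) + linkCost c S1 := e2
        _ ≤ (c l''.1 l''.2.1 s + c u v t) + linkCost c S1 := by
            exact add_le_add_left hcostm _
        _ = linkCost c F := by rw [e1]; ring
    · -- potential
      left
      have hphil'' : phi1 ends l'' = 1 + (if IsCornerNode ends y then 0 else 1) := by
        unfold phi1
        rcases hxy with ⟨h1, h2⟩ | ⟨h1, h2⟩
        · rw [h1, h2, hxu, if_neg hnc]
        · rw [h1, h2, hxu, if_neg hnc]
          ring
      have hphim : phi1 ends m = (if IsCornerNode ends y then 0 else 1)
          + (if IsCornerNode ends v then 0 else 1) := rfl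
      have hP1 : Phi1 ends F' ≤ phi1 ends m + Phi1 ends S1 := by
        by_cases hmS : m ∈ S1
        · rw [hF', Finset.insert_eq_self.2 hmS]
          exact Nat.le_add_left _ _
        · rw [hF']
          unfold Phi1
          rw [Finset.sum_insert hmS]
      rw [hPhi1F, hphil, hphil'']
      rw [hphim] at hP1
      omega
  · -- CASE x ∈ compA : replace (u,v,t) by its shadow (a,v,t), or drop it
    have hK2facts : ∀ X, IsMinCut ends X → u ∈ X → a ∉ X →
        (y ∈ X ∧ x ∉ X ∧ v ∉ X) := by
      intro X hX huX haX
      have hXeq := hK2a X hX huX haX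
      have hyX : y ∈ X := by
        rw [hXeq]
        exact Finset.mem_union_left _ hyB
      have hxX : x ∉ X := by
        rw [hXeq]
        intro hmem
        rcases Finset.mem_union.1 hmem with h | h
        · exact hdisj x hxA h
        · rw [Finset.mem_singleton.1 h] at hxA
          exact huA hxA
      have hvX : v ∉ X := by
        rw [hXeq]
        intro hmem
        rcases Finset.mem_union.1 hmem with h | h
        · exact hdisj v hvA h
        · rw [Finset.mem_singleton.1 h] at hvA
          exact huA hvA
      exact ⟨hyX, hxX, hvX⟩
    by_cases hav : a = v
    · -- drop the link (u,v,t) entirely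
      set F' : Finset (V × V × ℕ) := F.erase (u, v, t) with hF'
      have hcovrepl : ∀ X : Finset V, IsMinCut ends X → Covers (u, v, t) X →
          Covers l'' X := by
        have hcore : ∀ X : Finset V, IsMinCut ends X → u ∈ X → Covers (u, v, t) X →
            Covers l'' X := by
          intro X hX huX hc
          have hvX : v ∉ X := by
            rcases hc with ⟨h1, h2⟩ | ⟨h1, h2⟩
            · exact h2
            · exact absurd huX h2
          obtain ⟨hyX, hxX, _⟩ := hK2facts X hX huX (hav ▸ hvX)
          rw [hcovl'']
          exact Or.inr ⟨hyX, hxX⟩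
        intro X hX hc
        by_cases huX : u ∈ X
        · exact hcore X hX huX hc
        · rw [← covers_compl (X := X) (l := l'')]
          exact hcore Xᶜ (isMinCut_compl ends hX) (Finset.mem_compl.2 huX)
            (covers_compl.2 hc)
      refine ⟨F', ⟨?_, ?_, ?_⟩, ?_, ?_⟩
      · intro l0 hl0
        exact hF.1 _ (Finset.mem_of_mem_erase hl0)
      · calc ∑ l ∈ F', l.2.2 ≤ ∑ l ∈ F, l.2.2 :=
              Finset.sum_le_sum_of_subset (Finset.erase_subset _ _)
          _ ≤ p := hF.2.1
      · intro X hX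
        obtain ⟨g, hgF, hgcov⟩ := hF.2.2 X hX
        by_cases hg1 : g = (u, v, t)
        · exact ⟨l'', Finset.mem_erase.2 ⟨hlne, hl''F⟩, hcovrepl X hX (hg1 ▸ hgcov)⟩
        · exact ⟨g, Finset.mem_erase.2 ⟨hg1, hgF⟩, hgcov⟩
      · exact Finset.sum_le_sum_of_subset (Finset.erase_subset _ _)
      · left
        rw [hPhi1F']
        rw [hphil]
        omega
    · -- replace (u,v,t) by (a,v,t)
      set m : V × V × ℕ := (a, v, t) with hm
      have hshadow : ∀ X, IsMinCut ends X → Covers m X → Covers (u, v, t) X := by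
        rintro X hX (⟨haX, hvX⟩ | ⟨hvX, haX⟩)
        · -- a ∈ X, v ∉ X ; show u ∈ X
          have huX : u ∈ X := by
            by_contra huX
            have h1 := hK2a Xᶜ (isMinCut_compl ends hX) (Finset.mem_compl.2 huX)
              (by simpa using haX)
            have hvXc : v ∈ Xᶜ := Finset.mem_compl.2 hvX
            rw [h1] at hvXc
            rcases Finset.mem_union.1 hvXc with h | h
            · exact hdisj v hvA h
            · rw [Finset.mem_singleton.1 h] at hvA
              exact huA hvA
          exact Or.inl ⟨huX, hvX⟩
        · -- v ∈ X, a ∉ X ; show u ∉ X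
          have huX : u ∉ X := by
            intro huX
            have h1 := hK2a X hX huX haX
            have hvX' : v ∈ X := hvX
            rw [h1] at hvX'
            rcases Finset.mem_union.1 hvX' with h | h
            · exact hdisj v hvA h
            · rw [Finset.mem_singleton.1 h] at hvA
              exact huA hvA
          exact Or.inr ⟨hvX, huX⟩
      have hcovrepl : ∀ X : Finset V, IsMinCut ends X → Covers (u, v, t) X →
          Covers m X ∨ Covers l'' X := by
        have hcore : ∀ X : Finset V, IsMinCut ends X → u ∈ X → Covers (u, v, t) X →
            Covers m X ∨ Covers l'' X := by
          intro X hX huX hc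
          have hvX : v ∉ X := by
            rcases hc with ⟨h1, h2⟩ | ⟨h1, h2⟩
            · exact h2
            · exact absurd huX h2
          by_cases haX : a ∈ X
          · exact Or.inl (Or.inl ⟨haX, hvX⟩)
          · obtain ⟨hyX, hxX, _⟩ := hK2facts X hX huX haX
            right
            rw [hcovl'']
            exact Or.inr ⟨hyX, hxX⟩
        intro X hX hc
        by_cases huX : u ∈ X
        · exact hcore X hX huX hc
        · rcases hcore Xᶜ (isMinCut_compl ends hX) (Finset.mem_compl.2 huX)
            (covers_compl.2 hc) with h | h
          · exact Or.inl (covers_compl.1 h)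
          · exact Or.inr (covers_compl.1 h)
      have hvalm : ValidLink p m := ⟨hav, ht1, htp⟩
      have hcostm : c a v t ≤ c u v t :=
        hmetric.1 (u, v, t) m hval hvalm ⟨le_refl t, hshadow⟩
      set S0 : Finset (V × V × ℕ) := F.erase (u, v, t) with hS0
      set F' : Finset (V × V × ℕ) := insert m S0 with hF'
      have hS0F : S0 ⊆ F := Finset.erase_subset _ _
      have hl''S0 : l'' ∈ S0 := Finset.mem_erase.2 ⟨hlne, hl''F⟩
      -- covSet inclusion and strictness
      have hss : covSet ends m ⊂ covSet ends (u, v, t) := by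
        constructor
        · intro X hXm
          obtain ⟨_, hX, hcov⟩ := Finset.mem_filter.1 hXm
          exact Finset.mem_filter.2 ⟨Finset.mem_univ _, hX, hshadow X hX hcov⟩
        · intro hsub
          have hAin : compA ∈ covSet ends (u, v, t) :=
            Finset.mem_filter.2 ⟨Finset.mem_univ _, hminA, Or.inr ⟨hvA, huA⟩⟩
          have := hsub hAin
          obtain ⟨_, _, hcov⟩ := Finset.mem_filter.1 this
          rcases hcov with ⟨h1, h2⟩ | ⟨h1, h2⟩
          · exact h2 hvA
          · exact h2 haA
      refine ⟨F', ⟨?_, ?_, ?_⟩, ?_, ?_⟩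
      · intro l0 hl0
        rcases Finset.mem_insert.1 hl0 with rfl | hl0
        · exact hvalm
        · exact hF.1 _ (hS0F hl0)
      · by_cases hmS : m ∈ S0
        · rw [hF', Finset.insert_eq_self.2 hmS]
          calc ∑ l ∈ S0, l.2.2 ≤ ∑ l ∈ F, l.2.2 := Finset.sum_le_sum_of_subset hS0F
            _ ≤ p := hF.2.1
        · rw [hF', Finset.sum_insert hmS]
          have h2 : t + ∑ l ∈ S0, l.2.2 = ∑ l ∈ F, l.2.2 :=
            Finset.add_sum_erase F (fun l => l.2.2) hlF
          have h3 := hF.2.1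
          have h4 : m.2.2 = t := rfl
          omega
      · intro X hX
        obtain ⟨g, hgF, hgcov⟩ := hF.2.2 X hX
        by_cases hg1 : g = (u, v, t)
        · rcases hcovrepl X hX (hg1 ▸ hgcov) with h | h
          · exact ⟨m, Finset.mem_insert_self _ _, h⟩
          · exact ⟨l'', Finset.mem_insert_of_mem hl''S0, h⟩
        · exact ⟨g, Finset.mem_insert_of_mem (Finset.mem_erase.2 ⟨hg1, hgF⟩), hgcov⟩
      · -- cost
        have e1 : linkCost c F = c u v t + linkCost c S0 := by
          unfold linkCost
          rw [Finset.add_sum_erase _ (fun l => c l.1 l.2.1 l.2.2) hlF]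
        have e2 : linkCost c F' ≤ c a v t + linkCost c S0 := by
          by_cases hmS : m ∈ S0
          · rw [hF', Finset.insert_eq_self.2 hmS]
            exact le_add_self
          · rw [hF']
            unfold linkCost
            rw [Finset.sum_insert hmS]
        calc linkCost c F' ≤ c a v t + linkCost c S0 := e2
          _ ≤ c u v t + linkCost c S0 := add_le_add_left hcostm _
          _ = linkCost c F := e1.symm
      · -- potential
        by_cases hmS : m ∈ S0
        · left
          have : F' = S0 := Finset.insert_eq_self.2 hmS
          rw [this, hPhi1F', hphil]
          omega
        · right
          constructor
          · have h1 : Phi1 ends F' = phi1 ends m + Phi1 ends S0 := by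
              rw [hF']
              unfold Phi1
              rw [Finset.sum_insert hmS]
            have h2 : phi1 ends m ≤ phi1 ends (u, v, t) := by
              rw [hm]
              simp only [phi1]
              rw [if_neg hnc]
              split <;> omega
            rw [h1, hPhi1F']
            omega
          · have h1 : Phi2 ends F' = (covSet ends m).card + Phi2 ends S0 := by
              rw [hF']
              unfold Phi2
              rw [Finset.sum_insert hmS]
            have h2 : (covSet ends m).card < (covSet ends (u, v, t)).card :=
              Finset.card_lt_card hss
            rw [h1, hPhi2F']
            omega

end CactusAux

namespace CactusAux
set_option linter.unusedSectionVars false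
set_option maxHeartbeats 2000000

variable {V E : Type*} [Fintype V] [Fintype E]

lemma improve (ends : E → Sym2 V)
    (hloopless : ∀ e : E, ¬ (ends e).IsDiag)
    (hV : 2 ≤ Fintype.card V)
    (h2ec : ∀ X : Finset V, X ≠ ∅ → X ≠ Finset.univ → 2 ≤ cutDeg ends X)
    (hcactus : ∀ e : E, ∃! C : Finset E, IsCircuit ends C ∧ e ∈ C)
    (p : ℕ) (c : V → V → ℕ → ℝ≥0∞)
    (hsymm : ∀ x y t, c x y t = c y x t) (hmetric : IsMetricInstance ends p c)
    {F : Finset (V × V × ℕ)} (hF : Feasible ends p F)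
    {l : V × V × ℕ} (hlF : l ∈ F) (hnc : ¬ IsCornerNode ends l.1) :
    ∃ F', Feasible ends p F' ∧ linkCost c F' ≤ linkCost c F ∧
      (Phi1 ends F' < Phi1 ends F ∨
        (Phi1 ends F' ≤ Phi1 ends F ∧ Phi2 ends F' < Phi2 ends F)) := by
  obtain ⟨u, v, t⟩ := l
  obtain ⟨a, b, compA, compB, haA, hbB, huA, huB, hdisj, hpart, hminA, hminB,
    hK2a, hK2b, hK3⟩ := noncorner_structure ends hloopless hV h2ec hcactus hnc
  rcases hpart v with hv | hv | hv
  · exact absurd hv.symm (hF.1 _ hlF).1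
  · exact improve_side ends p c hsymm hmetric hF hlF hnc haA huA huB hdisj hpart
      hminA hminB hK2a hK3 hv
  · exact improve_side ends p c hsymm hmetric hF hlF hnc hbB huB huA
      (fun w h1 h2 => hdisj w h2 h1)
      (fun w => by
        rcases hpart w with h | h | h
        · exact Or.inl h
        · exact Or.inr (Or.inr h)
        · exact Or.inr (Or.inl h))
      hminB hminA hK2b
      (fun X h1 h2 => (hK3 X h1 h2).symm) hv

/-- reversing a link -/
def revl (l : V × V × ℕ) : V × V × ℕ := (l.2.1, l.1, l.2.2)

lemma covers_revl {l : V × V × ℕ} {X : Finset V} : Covers (revl l) X ↔ Covers l X := by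
  unfold Covers revl
  simp only
  rw [Xor', xor_comm]

lemma revl_injOn (F : Finset (V × V × ℕ)) :
    ∀ x ∈ F, ∀ y ∈ F, revl x = revl y → x = y := by
  rintro ⟨x1, x2, x3⟩ _ ⟨y1, y2, y3⟩ _ h
  unfold revl at h
  simp only [Prod.mk.injEq] at h ⊢
  tauto

lemma feasible_revl (ends : E → Sym2 V) (p : ℕ) {F : Finset (V × V × ℕ)}
    (hF : Feasible ends p F) : Feasible ends p (F.image revl) := by
  refine ⟨?_, ?_, ?_⟩
  · intro l0 hl0
    obtain ⟨l1, hl1, rfl⟩ := Finset.mem_image.1 hl0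
    obtain ⟨h1, h2, h3⟩ := hF.1 l1 hl1
    exact ⟨h1.symm, h2, h3⟩
  · rw [Finset.sum_image (revl_injOn F)]
    exact hF.2.1
  · intro X hX
    obtain ⟨l1, hl1, hcov⟩ := hF.2.2 X hX
    exact ⟨revl l1, Finset.mem_image_of_mem _ hl1, covers_revl.2 hcov⟩

lemma cost_revl (c : V → V → ℕ → ℝ≥0∞) (hsymm : ∀ x y t, c x y t = c y x t)
    (F : Finset (V × V × ℕ)) : linkCost c (F.image revl) = linkCost c F := by
  unfold linkCost
  rw [Finset.sum_image (revl_injOn F)]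
  exact Finset.sum_congr rfl fun l _ => by
    unfold revl
    simp only
    rw [hsymm]

lemma phi1_revl (ends : E → Sym2 V) (l : V × V × ℕ) :
    phi1 ends (revl l) = phi1 ends l := by
  unfold phi1 revl
  simp only
  ring

lemma covSet_revl (ends : E → Sym2 V) (l : V × V × ℕ) :
    covSet ends (revl l) = covSet ends l := by
  unfold covSet
  apply Finset.filter_congr
  intro X _
  rw [covers_revl]

lemma Phi1_revl (ends : E → Sym2 V) (F : Finset (V × V × ℕ)) :
    Phi1 ends (F.image revl) = Phi1 ends F := by
  unfold Phi1
  rw [Finset.sum_image (revl_injOn F)]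
  exact Finset.sum_congr rfl fun l _ => phi1_revl ends l

lemma Phi2_revl (ends : E → Sym2 V) (F : Finset (V × V × ℕ)) :
    Phi2 ends (F.image revl) = Phi2 ends F := by
  unfold Phi2
  rw [Finset.sum_image (revl_injOn F)]
  exact Finset.sum_congr rfl fun l _ => by rw [covSet_revl]

end CactusAux

open CactusAux in
/-- For a metric weighted link instance on a cactus that admits a feasible link set,
there is an optimal (minimum-cost feasible) link set all of whose links are incident
only to corner nodes. -/
theorem exists_optimal_on_corners_cactus {V E : Type*} [Fintype V] [Fintype E]
    (ends : E → Sym2 V) (hloopless : ∀ e : E, ¬ (ends e).IsDiag)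
    (hV : 2 ≤ Fintype.card V)
    (h2ec : ∀ X : Finset V, X ≠ ∅ → X ≠ Finset.univ → 2 ≤ cutDeg ends X)
    (hcactus : ∀ e : E, ∃! C : Finset E, IsCircuit ends C ∧ e ∈ C)
    (p : ℕ) (c : V → V → ℕ → ℝ≥0∞) (hsymm : ∀ u v t, c u v t = c v u t)
    (hmetric : IsMetricInstance ends p c)
    (hfeas : ∃ F : Finset (V × V × ℕ), Feasible ends p F) :
    ∃ F : Finset (V × V × ℕ), Feasible ends p F ∧
      (∀ F' : Finset (V × V × ℕ), Feasible ends p F' →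
        linkCost c F ≤ linkCost c F') ∧
      ∀ l ∈ F, IsCornerNode ends l.1 ∧ IsCornerNode ends l.2.1 := by
  classical
  set L : Finset (V × V × ℕ) :=
    Finset.univ ×ˢ Finset.univ ×ˢ Finset.range (p + 1) with hL
  have hFL : ∀ F : Finset (V × V × ℕ), Feasible ends p F → F ⊆ L := by
    intro F hF l hl
    rw [hL, Finset.mem_product]
    refine ⟨Finset.mem_univ _, ?_⟩
    rw [Finset.mem_product]
    exact ⟨Finset.mem_univ _, Finset.mem_range.2 (by
      have := (hF.1 l hl).2.2
      omega)⟩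
  set N : ℕ := L.card * Fintype.card (Finset V) with hN
  have hPhi2le : ∀ F : Finset (V × V × ℕ), Feasible ends p F → Phi2 ends F ≤ N := by
    intro F hF
    calc Phi2 ends F ≤ ∑ _l ∈ F, Fintype.card (Finset V) :=
          Finset.sum_le_sum (fun l _ => Finset.card_le_univ _)
      _ = F.card * Fintype.card (Finset V) := by
          rw [Finset.sum_const, smul_eq_mul]
      _ ≤ N := by
          rw [hN]
          exact Nat.mul_le_mul_right _ (Finset.card_le_card (hFL F hF))
  set Cands : Finset (Finset (V × V × ℕ)) :=
    L.powerset.filter (fun F => Feasible ends p F) with hCands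
  have hmemCands : ∀ F : Finset (V × V × ℕ), F ∈ Cands ↔ Feasible ends p F := by
    intro F
    rw [hCands, Finset.mem_filter, Finset.mem_powerset]
    constructor
    · exact fun h => h.2
    · exact fun h => ⟨hFL F h, h⟩
  obtain ⟨F0, hF0⟩ := hfeas
  have hCne : Cands.Nonempty := ⟨F0, (hmemCands F0).2 hF0⟩
  obtain ⟨Fopt0, hFopt0, hmin0⟩ := Finset.exists_min_image Cands (linkCost c) hCne
  set Opts : Finset (Finset (V × V × ℕ)) :=
    Cands.filter (fun F => ∀ F' ∈ Cands, linkCost c F ≤ linkCost c F') with hOpts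
  have hOne : Opts.Nonempty := ⟨Fopt0, Finset.mem_filter.2 ⟨hFopt0, hmin0⟩⟩
  obtain ⟨Fs, hFsO, hFsmin⟩ := Finset.exists_min_image Opts
    (fun F => Phi1 ends F * (N + 1) + Phi2 ends F) hOne
  have hFsC : Fs ∈ Cands := (Finset.mem_filter.1 hFsO).1
  have hFsopt : ∀ F' ∈ Cands, linkCost c Fs ≤ linkCost c F' :=
    (Finset.mem_filter.1 hFsO).2
  have hFsfeas : Feasible ends p Fs := (hmemCands Fs).1 hFsC
  -- the key improvement contradiction
  have hkey : ∀ (F1 : Finset (V × V × ℕ)) (l1 : V × V × ℕ), Feasible ends p F1 →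
      l1 ∈ F1 → ¬ IsCornerNode ends l1.1 →
      (∀ F2 ∈ Cands, linkCost c F1 ≤ linkCost c F2) →
      Phi1 ends F1 * (N + 1) + Phi2 ends F1 ≤ Phi1 ends Fs * (N + 1) + Phi2 ends Fs →
      False := by
    intro F1 l1 hfe hmem hnc hopt hpsi
    obtain ⟨F', hfe', hcost', hlex⟩ :=
      improve ends hloopless hV h2ec hcactus p c hsymm hmetric hfe hmem hnc
    have hF'O : F' ∈ Opts := by
      rw [hOpts, Finset.mem_filter]
      exact ⟨(hmemCands F').2 hfe',
        fun F2 h2 => le_trans hcost' (hopt F2 h2)⟩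
    have h1 := hFsmin F' hF'O
    have h2 : Phi1 ends F' * (N + 1) + Phi2 ends F'
        < Phi1 ends F1 * (N + 1) + Phi2 ends F1 := by
      have hb := hPhi2le F' hfe'
      rcases hlex with hlt | ⟨hle, hlt2⟩
      · have e1 : (Phi1 ends F' + 1) * (N + 1) = Phi1 ends F' * (N + 1) + (N + 1) := by
          ring
        have e2 : (Phi1 ends F' + 1) * (N + 1) ≤ Phi1 ends F1 * (N + 1) :=
          Nat.mul_le_mul_right _ (by omega)
        omega
      · have e2 : Phi1 ends F' * (N + 1) ≤ Phi1 ends F1 * (N + 1) :=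
          Nat.mul_le_mul_right _ hle
        omega
    omega
  refine ⟨Fs, hFsfeas, ?_, ?_⟩
  · intro F' hF'
    exact hFsopt F' ((hmemCands F').2 hF')
  · intro l hl
    by_contra hcon
    rw [not_and_or] at hcon
    rcases hcon with hnc | hnc
    · exact hkey Fs l hFsfeas hl hnc hFsopt (le_refl _)
    · -- work with the reversed link set
      have hfeR : Feasible ends p (Fs.image revl) := feasible_revl ends p hFsfeas
      have hcostR : linkCost c (Fs.image revl) = linkCost c Fs := cost_revl c hsymm Fs
      apply hkey (Fs.image revl) (revl l) hfeR (Finset.mem_image_of_mem _ hl) hnc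
      · intro F2 h2
        rw [hcostR]
        exact hFsopt F2 h2
      · rw [Phi1_revl, Phi2_revl]
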